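/- Let Z be a penetrable CAT(1) space. If p₀ and q₀ are mutually opposite (1,δ)-suspenders, i.e., sup_{z∈Z} (d(p₀,z) + d(z,q₀)) < π + δ, then inf_{z∈Z} (d(p₀,z) + d(z,q₀)) > π − δ. -/
import Mathlib


open Real Metric

/-- A metric space is `CAT(1)` if every pair of points at distance `< π` has a midpoint
satisfying the spherical comparison (CN-type) inequality against triangles of perimeter
`< 2π` in the unit sphere. -/
def IsCATOne (Z : Type*) [MetricSpace Z] : Prop :=
  ∀ x y : Z, dist x y < π →
    ∃ m : Z, dist x m = dist x y / 2 ∧ dist m y = dist x y / 2 ∧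
      ∀ p : Z, dist p x + dist x y + dist y p < 2 * π →
        (Real.cos (dist p x) + Real.cos (dist p y)) / 2 ≤
          Real.cos (dist p m) * Real.cos (dist x y / 2)

/-- A metric space is penetrable if it has a dense subset `Z₀` such that every point of `Z₀`
has a point of `Z₀` at distance at least `π`. -/
def Penetrable (Z : Type*) [MetricSpace Z] : Prop :=
  ∃ Z₀ : Set Z, Dense Z₀ ∧ ∀ p ∈ Z₀, ∃ q ∈ Z₀, π ≤ dist p q

/-- In a penetrable CAT(1) space, if `p₀` and `q₀` are mutually opposite
`(1,δ)`-suspenders, i.e. `sup_z (d(p₀,z) + d(z,q₀)) < π + δ`, then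
`inf_z (d(p₀,z) + d(z,q₀)) > π - δ`. -/
theorem stmt_2 {Z : Type*} [MetricSpace Z] (hZ : IsCATOne Z) (hpen : Penetrable Z)
    (δ : ℝ) (hδ0 : 0 < δ) (hδ1 : δ < 1) (p₀ q₀ : Z)
    (hsup : ∃ c, c < π + δ ∧ ∀ z : Z, dist p₀ z + dist z q₀ ≤ c) :
    ∃ c, π - δ < c ∧ ∀ z : Z, c ≤ dist p₀ z + dist z q₀ := by
  obtain ⟨c, hc, hle⟩ := hsup
  obtain ⟨Z₀, hdense, hant⟩ := hpen
  have key : ∀ p ∈ Z₀, 2 * π - c ≤ dist p₀ p + dist p q₀ := by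
    intro p hp
    obtain ⟨q, hq, hpq⟩ := hant p hp
    have h1 := hle q
    have t1 := dist_triangle p p₀ q
    have t2 := dist_triangle p q₀ q
    have e1 : dist p p₀ = dist p₀ p := dist_comm _ _
    have e2 : dist q₀ q = dist q q₀ := dist_comm _ _
    linarith
  refine ⟨2 * π - c, by linarith, fun z => ?_⟩
  refine le_of_forall_pos_le_add (fun ε hε => ?_)
  obtain ⟨p, hpZ, hpz⟩ := hdense.exists_dist_lt z (half_pos hε)
  have hk := key p hpZ
  have t1 := dist_triangle p₀ z p
  have t2 := dist_triangle p z q₀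
  have e1 : dist p z = dist z p := dist_comm _ _
  linarith
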